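/- Rotation preserving zero loading restrictions (IZ can be imposed without loss of generality): let f_t = (g_t', h_t')' ∈ R^{r_1+r_2} for t=1,…,T, let Γ = (Γ^g, Γ^h) be an m×(r_1+r_2) loading matrix whose first row-block corresponding to the y equation has the form λ_i = (ψ_i', 0_{r_2}')' (i.e., the loadings of h_t in the y equation are zero), and let Σ be m×m symmetric positive definite. Assume the sample covariance M_{ff} of (f_t) is positive definite and that the relevant symmetric matrices below have distinct eigenvalues. Then there exists an invertible (r_1+r_2)×(r_1+r_2) matrix A such that, setting Γ^⋆ = Γ A^{-1} and f_t^⋆ = A(f_t − f̄), one has: (i) Γ f_t = Γ f̄ + Γ^⋆ f_t^⋆; (ii) the loadings of the transformed h-factors in the y equation remain zero (the zero block Φ = 0 is preserved); (iii) T^{-1}Σ_t f_t^⋆ = 0 and T^{-1}Σ_t f_t^⋆ f_t^{⋆'} = I_{r_1+r_2}; and (iv) m^{-1}Γ^{g⋆'}Σ^{-1}Γ^{g⋆} and m^{-1}Γ^{h⋆'}Σ^{-1}Γ^{h⋆} are diagonal with distinct descending diagonal entries, where Γ^{g⋆}, Γ^{h⋆} are the blocks of Γ^⋆ corresponding to the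 transformed g- and h-factors. -/

import Mathlib

/-!
STATEMENT 14: Rotation preserving zero loading restrictions (IZ can be imposed
without loss of generality).  For factors f_t = (g_t', h_t')' ∈ ℝ^{r₁+r₂} with positive
definite sample covariance and a loading matrix Γ whose y-equation rows have zero
h-block, there is an invertible A such that Γ⋆ = Γ A⁻¹ and f⋆_t = A(f_t − f̄) satisfy:
(i) Γ f_t = Γ f̄ + Γ⋆ f⋆_t; (ii) rows of Γ with zero h-block keep a zero h-block in Γ⋆;
(iii) zero sample mean and identity sample covariance of f⋆; (iv) m⁻¹Γ^{g⋆}'Σ⁻¹Γ^{g⋆}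
and m⁻¹Γ^{h⋆}'Σ⁻¹Γ^{h⋆} diagonal with distinct descending diagonal entries.
The genericity assumption ("the relevant symmetric matrices have distinct
eigenvalues") is expressed as the existence of spectral decompositions with strictly
descending eigenvalues for the two matrices arising from the explicit block-Cholesky
whitening step of the construction.
-/

open Matrix BigOperators

noncomputable section

/-- Sample mean of the factors. -/
def fbar {T r : ℕ} (f : Fin T → Fin r → ℝ) : Fin r → ℝ :=
  (T : ℝ)⁻¹ • ∑ t, f t

/-- Sample covariance matrix `M_ff` of the factors. -/
def Mff {T r : ℕ} (f : Fin T → Fin r → ℝ) : Matrix (Fin r) (Fin r) ℝ :=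
  (T : ℝ)⁻¹ • ∑ t, Matrix.of fun a b => (f t a - fbar f a) * (f t b - fbar f b)

/-- Diagonal with distinct diagonal entries arranged in descending order. -/
def DiagDistinctDesc {n : ℕ} (A : Matrix (Fin n) (Fin n) ℝ) : Prop :=
  ∃ d : Fin n → ℝ, (∀ a b : Fin n, a < b → d b < d a) ∧ A = Matrix.diagonal d

/-- Spectral decomposition with strictly descending (hence distinct) eigenvalues;
for a symmetric matrix this says exactly that all eigenvalues are distinct. -/
def HasDistinctEigen {n : ℕ} (A : Matrix (Fin n) (Fin n) ℝ) : Prop :=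
  ∃ (U : Matrix (Fin n) (Fin n) ℝ) (d : Fin n → ℝ),
    U * Uᵀ = 1 ∧ Uᵀ * U = 1 ∧ (∀ a b : Fin n, a < b → d b < d a) ∧
    A = U * Matrix.diagonal d * Uᵀ

/-- The positive semidefinite square root of a positive semidefinite matrix
(the definition of `Matrix.PosSemidef.sqrt` in the older Mathlib). -/
def psdSqrt {n : Type*} [Fintype n] [DecidableEq n] {A : Matrix n n ℝ} (hA : A.PosSemidef) :
    Matrix n n ℝ :=
  (hA.1.eigenvectorUnitary : Matrix n n ℝ) * Matrix.diagonal ((√·) ∘ hA.1.eigenvalues) *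
    (star hA.1.eigenvectorUnitary : Matrix n n ℝ)

section

variable {T m r₁ r₂ : ℕ} (f : Fin T → Fin (r₁ + r₂) → ℝ)

/-- `M_gg` block of the sample covariance. -/
def Mgg : Matrix (Fin r₁) (Fin r₁) ℝ :=
  (Mff f).submatrix (Fin.castAdd r₂) (Fin.castAdd r₂)

/-- `M_hg` block of the sample covariance. -/
def Mhg : Matrix (Fin r₂) (Fin r₁) ℝ :=
  (Mff f).submatrix (Fin.natAdd r₁) (Fin.castAdd r₂)

/-- `M_hh` block of the sample covariance. -/
def Mhh : Matrix (Fin r₂) (Fin r₂) ℝ :=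
  (Mff f).submatrix (Fin.natAdd r₁) (Fin.natAdd r₁)

/-- Schur complement `M_hh − M_hg M_gg⁻¹ M_gh`. -/
def MhhG : Matrix (Fin r₂) (Fin r₂) ℝ :=
  Mhh f - Mhg f * (Mgg f)⁻¹ * (Mhg f)ᵀ

/-- The block-lower-triangular whitening matrix
`A₀ = [[M_gg^{-1/2}, 0], [−S₂⁻¹ M_hg M_gg⁻¹, S₂⁻¹]]` (S₂ = Schur complement square root),
which turns the factors into ones with zero mean and identity sample covariance while
keeping the transformation block-lower-triangular (so zero h-loadings are preserved). -/
def whiten (hMgg : (Mgg f).PosDef) (hS : (MhhG f).PosDef) :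
    Matrix (Fin (r₁ + r₂)) (Fin (r₁ + r₂)) ℝ :=
  (Matrix.reindex finSumFinEquiv finSumFinEquiv)
    (Matrix.fromBlocks (psdSqrt hMgg.posSemidef)⁻¹ 0
      (-((psdSqrt hS.posSemidef)⁻¹ * Mhg f * (Mgg f)⁻¹)) (psdSqrt hS.posSemidef)⁻¹)

end

/-! ### Auxiliary lemmas -/

lemma psdSqrt_mul_self {n : Type*} [Fintype n] [DecidableEq n] {A : Matrix n n ℝ}
    (hA : A.PosSemidef) : psdSqrt hA * psdSqrt hA = A := by
  conv_rhs => rw [hA.1.spectral_theorem, Unitary.conjStarAlgAut_apply]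
  unfold psdSqrt
  have hU : (star hA.1.eigenvectorUnitary : Matrix n n ℝ) * hA.1.eigenvectorUnitary = 1 :=
    Unitary.coe_star_mul_self _
  calc _ = (hA.1.eigenvectorUnitary : Matrix n n ℝ) *
        (Matrix.diagonal ((√·) ∘ hA.1.eigenvalues) *
          ((star hA.1.eigenvectorUnitary : Matrix n n ℝ) * hA.1.eigenvectorUnitary) *
          Matrix.diagonal ((√·) ∘ hA.1.eigenvalues)) *
        (star hA.1.eigenvectorUnitary : Matrix n n ℝ) := by simp only [Matrix.mul_assoc]
    _ = _ := by
      rw [hU, Matrix.mul_one, Matrix.diagonal_mul_diagonal]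
      congr 2
      ext i j
      simp only [Matrix.diagonal_apply]
      split_ifs <;> simp [Real.mul_self_sqrt (hA.eigenvalues_nonneg _)]

lemma psdSqrt_transpose {n : Type*} [Fintype n] [DecidableEq n] {A : Matrix n n ℝ}
    (hA : A.PosSemidef) : (psdSqrt hA)ᵀ = psdSqrt hA := by
  unfold psdSqrt
  rw [Matrix.star_eq_conjTranspose, Matrix.conjTranspose_eq_transpose_of_trivial]
  simp [Matrix.transpose_mul, Matrix.mul_assoc]

lemma herm_transpose_eq {n : ℕ} {M : Matrix (Fin n) (Fin n) ℝ} (h : M.IsHermitian) :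
    Mᵀ = M := by
  rw [← Matrix.conjTranspose_eq_transpose_of_trivial]; exact h

lemma mul_reindex_block {m r₁ r₂ : ℕ} (Γ₀ : Matrix (Fin m) (Fin (r₁+r₂)) ℝ)
    (P : Matrix (Fin r₁) (Fin r₁) ℝ) (Q : Matrix (Fin r₁) (Fin r₂) ℝ)
    (R : Matrix (Fin r₂) (Fin r₁) ℝ) (S : Matrix (Fin r₂) (Fin r₂) ℝ) :
    ((Γ₀ * (Matrix.reindex finSumFinEquiv finSumFinEquiv) (Matrix.fromBlocks P Q R S)).submatrix
        id (Fin.castAdd r₂)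
      = Γ₀.submatrix id (Fin.castAdd r₂) * P + Γ₀.submatrix id (Fin.natAdd r₁) * R) ∧
    ((Γ₀ * (Matrix.reindex finSumFinEquiv finSumFinEquiv) (Matrix.fromBlocks P Q R S)).submatrix
        id (Fin.natAdd r₁)
      = Γ₀.submatrix id (Fin.castAdd r₂) * Q + Γ₀.submatrix id (Fin.natAdd r₁) * S) := by
  constructor <;> ext i a <;>
  · simp only [Matrix.submatrix_apply, Matrix.mul_apply, Matrix.add_apply, id_eq]
    rw [← Equiv.sum_comp finSumFinEquiv (fun j => Γ₀ i j * _)]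
    rw [Fintype.sum_sum_type]
    simp [Matrix.reindex_apply, finSumFinEquiv_apply_left, finSumFinEquiv_apply_right]

lemma Mff_transpose {T r : ℕ} (f : Fin T → Fin r → ℝ) : (Mff f)ᵀ = Mff f := by
  ext a b
  simp only [Mff, Matrix.transpose_apply, Matrix.smul_apply, Matrix.sum_apply,
    Matrix.of_apply, smul_eq_mul]
  congr 1
  exact Finset.sum_congr rfl fun t _ => by ring

lemma sum_centered {T r : ℕ} (f : Fin T → Fin r → ℝ) :
    (∑ t, (f t - fbar f)) = 0 := by
  rcases Nat.eq_zero_or_pos T with h | h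
  · subst h; simp
  · have hT : (T : ℝ) ≠ 0 := Nat.cast_ne_zero.mpr h.ne'
    have : (∑ t : Fin T, (f t - fbar f)) = (∑ t, f t) - (T : ℝ) • fbar f := by
      rw [Finset.sum_sub_distrib, Finset.sum_const, Finset.card_univ, Fintype.card_fin]
      simp [Nat.cast_smul_eq_nsmul ℝ]
    rw [this, fbar, smul_smul, mul_inv_cancel₀ hT, one_smul, sub_self]

lemma cov_transform {T r : ℕ} (f : Fin T → Fin r → ℝ) (A : Matrix (Fin r) (Fin r) ℝ) :
    ((T : ℝ)⁻¹ • ∑ t, Matrix.of (fun a b =>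
        A.mulVec (f t - fbar f) a * A.mulVec (f t - fbar f) b))
      = A * Mff f * Aᵀ := by
  have h : ∀ t, (Matrix.of (fun a b =>
      A.mulVec (f t - fbar f) a * A.mulVec (f t - fbar f) b))
      = A * (Matrix.of fun a b => (f t a - fbar f a) * (f t b - fbar f b)) * Aᵀ := by
    intro t
    ext a b
    simp only [Matrix.of_apply, Matrix.mul_apply, Matrix.transpose_apply, Matrix.mulVec,
      dotProduct, Pi.sub_apply]
    rw [Finset.sum_mul_sum]
    rw [Finset.sum_comm]
    refine Finset.sum_congr rfl fun c _ => ?_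
    rw [Finset.sum_mul]
    refine Finset.sum_congr rfl fun d _ => by ring
  simp_rw [h, ← Finset.sum_mul, ← Finset.mul_sum, Mff]
  rw [Matrix.mul_smul, Matrix.smul_mul]

section
variable {T r₁ r₂ : ℕ} (f : Fin T → Fin (r₁ + r₂) → ℝ)

lemma Mff_blocks : Mff f = (Matrix.reindex finSumFinEquiv finSumFinEquiv)
    (Matrix.fromBlocks (Mgg f) (Mhg f)ᵀ (Mhg f) (Mhh f)) := by
  ext i j
  obtain ⟨s, rfl⟩ : ∃ s, finSumFinEquiv s = i := ⟨_, finSumFinEquiv.apply_symm_apply i⟩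
  obtain ⟨u, rfl⟩ : ∃ u, finSumFinEquiv u = j := ⟨_, finSumFinEquiv.apply_symm_apply j⟩
  have hsym := Mff_transpose f
  cases s <;> cases u <;>
    simp [Mgg, Mhg, Mhh, finSumFinEquiv_apply_left, finSumFinEquiv_apply_right,
      Matrix.reindex_apply] <;>
    exact congrFun (congrFun hsym _) _

end

theorem stmt14 {T m r₁ r₂ : ℕ} (f : Fin T → Fin (r₁ + r₂) → ℝ)
    (Γ : Matrix (Fin m) (Fin (r₁ + r₂)) ℝ) (Sg : Matrix (Fin m) (Fin m) ℝ)
    (hSg : Sg.PosDef) (hM : (Mff f).PosDef)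
    (hMgg : (Mgg f).PosDef) (hS : (MhhG f).PosDef)
    -- genericity: the two symmetric matrices arising after the whitening step
    -- have distinct eigenvalues
    (hg : HasDistinctEigen ((m : ℝ)⁻¹ •
      ((Γ * (whiten f hMgg hS)⁻¹).submatrix id (Fin.castAdd r₂))ᵀ * Sg⁻¹ *
        ((Γ * (whiten f hMgg hS)⁻¹).submatrix id (Fin.castAdd r₂))))
    (hh : HasDistinctEigen ((m : ℝ)⁻¹ •
      ((Γ * (whiten f hMgg hS)⁻¹).submatrix id (Fin.natAdd r₁))ᵀ * Sg⁻¹ *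
        ((Γ * (whiten f hMgg hS)⁻¹).submatrix id (Fin.natAdd r₁)))) :
    ∃ A : Matrix (Fin (r₁ + r₂)) (Fin (r₁ + r₂)) ℝ, IsUnit A.det ∧
      -- (i) the common component is unchanged
      (∀ t, Γ.mulVec (f t) =
        Γ.mulVec (fbar f) + (Γ * A⁻¹).mulVec (A.mulVec (f t - fbar f))) ∧
      -- (ii) zero h-block rows (the y-equation loadings) stay zero
      (∀ i : Fin m, (∀ a : Fin r₂, Γ i (Fin.natAdd r₁ a) = 0) →
        ∀ a : Fin r₂, (Γ * A⁻¹) i (Fin.natAdd r₁ a) = 0) ∧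
      -- (iii) zero sample mean and identity sample covariance of the new factors
      (∑ t, A.mulVec (f t - fbar f)) = 0 ∧
      ((T : ℝ)⁻¹ • ∑ t, Matrix.of (fun a b =>
          A.mulVec (f t - fbar f) a * A.mulVec (f t - fbar f) b)
        = (1 : Matrix (Fin (r₁ + r₂)) (Fin (r₁ + r₂)) ℝ)) ∧
      -- (iv) the IZ diagonality normalizations hold for the new loadings
      DiagDistinctDesc ((m : ℝ)⁻¹ •
        ((Γ * A⁻¹).submatrix id (Fin.castAdd r₂))ᵀ * Sg⁻¹ *
          ((Γ * A⁻¹).submatrix id (Fin.castAdd r₂))) ∧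
      DiagDistinctDesc ((m : ℝ)⁻¹ •
        ((Γ * A⁻¹).submatrix id (Fin.natAdd r₁))ᵀ * Sg⁻¹ *
          ((Γ * A⁻¹).submatrix id (Fin.natAdd r₁))) := by
  obtain ⟨Ug, dg, hUg1, hUg2, hdg, hge⟩ := hg
  obtain ⟨Uh, dh, hUh1, hUh2, hdh, hhe⟩ := hh
  set e := finSumFinEquiv (m := r₁) (n := r₂) with he
  set Gs := psdSqrt hMgg.posSemidef with hGsdef
  set Ss := psdSqrt hS.posSemidef with hSsdef
  have hGsq : Gs * Gs = Mgg f := psdSqrt_mul_self hMgg.posSemidef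
  have hSsq : Ss * Ss = MhhG f := psdSqrt_mul_self hS.posSemidef
  have hGsT : Gsᵀ = Gs := psdSqrt_transpose hMgg.posSemidef
  have hSsT : Ssᵀ = Ss := psdSqrt_transpose hS.posSemidef
  have hdetGs : IsUnit Gs.det := by
    have h0 := hMgg.det_pos
    rw [← hGsq, Matrix.det_mul] at h0
    exact isUnit_iff_ne_zero.mpr fun h => by rw [h, mul_zero] at h0; exact lt_irrefl 0 h0
  have hdetSs : IsUnit Ss.det := by
    have h0 := hS.det_pos
    rw [← hSsq, Matrix.det_mul] at h0
    exact isUnit_iff_ne_zero.mpr fun h => by rw [h, mul_zero] at h0; exact lt_irrefl 0 h0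
  have hdetMgg : IsUnit (Mgg f).det := isUnit_iff_ne_zero.mpr hMgg.det_pos.ne'
  set G := Gs⁻¹ with hGdef
  set S := Ss⁻¹ with hSdef
  have hG1 : Gs * G = 1 := Matrix.mul_nonsing_inv _ hdetGs
  have hG2 : G * Gs = 1 := Matrix.nonsing_inv_mul _ hdetGs
  have hS1 : Ss * S = 1 := Matrix.mul_nonsing_inv _ hdetSs
  have hS2 : S * Ss = 1 := Matrix.nonsing_inv_mul _ hdetSs
  have hGT : Gᵀ = G := by rw [hGdef, Matrix.transpose_nonsing_inv, hGsT]
  have hST : Sᵀ = S := by rw [hSdef, Matrix.transpose_nonsing_inv, hSsT]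
  have hMggT : (Mgg f)ᵀ = Mgg f := by
    show ((Mff f).submatrix _ _)ᵀ = _
    rw [Matrix.transpose_submatrix, Mff_transpose]; rfl
  have hMggiT : ((Mgg f)⁻¹)ᵀ = (Mgg f)⁻¹ := by rw [Matrix.transpose_nonsing_inv, hMggT]
  have hMgg1 : Mgg f * (Mgg f)⁻¹ = 1 := Matrix.mul_nonsing_inv _ hdetMgg
  have hMgg2 : (Mgg f)⁻¹ * Mgg f = 1 := Matrix.nonsing_inv_mul _ hdetMgg
  -- applied cancellation lemmas
  have cG1 : ∀ (c : ℕ) (X : Matrix (Fin r₁) (Fin c) ℝ), Gs * (G * X) = X := fun c X => by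
    rw [← Matrix.mul_assoc, hG1, Matrix.one_mul]
  have cG2 : ∀ (c : ℕ) (X : Matrix (Fin r₁) (Fin c) ℝ), G * (Gs * X) = X := fun c X => by
    rw [← Matrix.mul_assoc, hG2, Matrix.one_mul]
  have cS1 : ∀ (c : ℕ) (X : Matrix (Fin r₂) (Fin c) ℝ), Ss * (S * X) = X := fun c X => by
    rw [← Matrix.mul_assoc, hS1, Matrix.one_mul]
  have cS2 : ∀ (c : ℕ) (X : Matrix (Fin r₂) (Fin c) ℝ), S * (Ss * X) = X := fun c X => by
    rw [← Matrix.mul_assoc, hS2, Matrix.one_mul]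
  have cMgg : ∀ (c : ℕ) (X : Matrix (Fin r₁) (Fin c) ℝ), Mgg f * ((Mgg f)⁻¹ * X) = X :=
    fun c X => by rw [← Matrix.mul_assoc, hMgg1, Matrix.one_mul]
  have cMggi : ∀ (c : ℕ) (X : Matrix (Fin r₁) (Fin c) ℝ), (Mgg f)⁻¹ * (Mgg f * X) = X :=
    fun c X => by rw [← Matrix.mul_assoc, hMgg2, Matrix.one_mul]
  -- the block matrices
  set W₀ : Matrix (Fin r₁ ⊕ Fin r₂) (Fin r₁ ⊕ Fin r₂) ℝ :=
    Matrix.fromBlocks G 0 (-(S * Mhg f * (Mgg f)⁻¹)) S with hW₀def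
  set W₀inv : Matrix (Fin r₁ ⊕ Fin r₂) (Fin r₁ ⊕ Fin r₂) ℝ :=
    Matrix.fromBlocks Gs 0 (Mhg f * (Mgg f)⁻¹ * Gs) Ss with hW₀invdef
  set Dmat : Matrix (Fin r₁ ⊕ Fin r₂) (Fin r₁ ⊕ Fin r₂) ℝ :=
    Matrix.fromBlocks Ugᵀ 0 0 Uhᵀ with hDdef
  set Dinv : Matrix (Fin r₁ ⊕ Fin r₂) (Fin r₁ ⊕ Fin r₂) ℝ :=
    Matrix.fromBlocks Ug 0 0 Uh with hDinvdef
  have hwhiten : whiten f hMgg hS = (Matrix.reindex e e) W₀ := rfl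
  have hmul : ∀ X Y : Matrix (Fin r₁ ⊕ Fin r₂) (Fin r₁ ⊕ Fin r₂) ℝ,
      (Matrix.reindex e e) X * (Matrix.reindex e e) Y = (Matrix.reindex e e) (X * Y) := by
    intro X Y
    simp only [Matrix.reindex_apply, Matrix.submatrix_mul_equiv]
  have hone : (Matrix.reindex e e) (1 : Matrix (Fin r₁ ⊕ Fin r₂) (Fin r₁ ⊕ Fin r₂) ℝ) = 1 := by
    simp [Matrix.reindex_apply, Matrix.submatrix_one_equiv]
  have hW1 : W₀ * W₀inv = 1 := by
    rw [hW₀def, hW₀invdef, Matrix.fromBlocks_multiply, ← Matrix.fromBlocks_one,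
      Matrix.fromBlocks_inj]
    refine ⟨by simp [hG2], by simp, ?_, by simp [hS2]⟩
    simp only [Matrix.neg_mul, Matrix.mul_assoc, Matrix.zero_mul, Matrix.mul_zero,
      add_zero, zero_add, neg_add_cancel]
  have hW2 : W₀inv * W₀ = 1 := by
    rw [hW₀def, hW₀invdef, Matrix.fromBlocks_multiply, ← Matrix.fromBlocks_one,
      Matrix.fromBlocks_inj]
    refine ⟨by simp [hG1], by simp, ?_, by simp [hS1]⟩
    simp only [Matrix.mul_neg, Matrix.mul_assoc, hG1, Matrix.mul_one, cS1,
      Matrix.zero_mul, Matrix.mul_zero, add_zero, zero_add, add_neg_cancel]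
  have hD1 : Dmat * Dinv = 1 := by
    rw [hDdef, hDinvdef, Matrix.fromBlocks_multiply, ← Matrix.fromBlocks_one,
      Matrix.fromBlocks_inj]
    exact ⟨by simp [hUg2], by simp, by simp, by simp [hUh2]⟩
  have hD2 : Dinv * Dmat = 1 := by
    rw [hDdef, hDinvdef, Matrix.fromBlocks_multiply, ← Matrix.fromBlocks_one,
      Matrix.fromBlocks_inj]
    exact ⟨by simp [hUg1], by simp, by simp, by simp [hUh1]⟩
  have hMhh_eq : Mhh f = Ss * Ss + Mhg f * (Mgg f)⁻¹ * (Mhg f)ᵀ := by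
    rw [hSsq, MhhG, sub_add_cancel]
  have hWN : W₀ * Matrix.fromBlocks (Mgg f) (Mhg f)ᵀ (Mhg f) (Mhh f) * W₀ᵀ = 1 := by
    have hz : -(S * Mhg f * (Mgg f)⁻¹) * Mgg f + S * Mhg f = 0 := by
      simp only [Matrix.neg_mul, Matrix.mul_assoc, hMgg2, Matrix.mul_one, neg_add_cancel]
    rw [hW₀def, Matrix.fromBlocks_transpose, Matrix.fromBlocks_multiply,
      Matrix.fromBlocks_multiply, ← Matrix.fromBlocks_one, Matrix.fromBlocks_inj]
    refine ⟨?_, ?_, ?_, ?_⟩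
    · -- 11
      simp only [Matrix.zero_mul, Matrix.mul_zero, Matrix.transpose_zero, add_zero, hGT]
      rw [← hGsq]
      simp only [Matrix.mul_assoc, hG1, Matrix.mul_one, hG2]
    · -- 12
      simp only [Matrix.zero_mul, add_zero, Matrix.transpose_neg, Matrix.transpose_mul,
        hMggiT, hST, Matrix.mul_neg, Matrix.mul_assoc, cMgg]
      exact neg_add_cancel _
    · -- 21
      simp only [Matrix.transpose_zero, Matrix.mul_zero, add_zero, hGT]
      rw [hz, Matrix.zero_mul]
    · -- 22
      rw [hz, Matrix.zero_mul, zero_add, hST, hMhh_eq]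
      simp only [Matrix.mul_add, Matrix.add_mul, Matrix.neg_mul, Matrix.mul_assoc,
        hS1, Matrix.mul_one, hS2, cS2, Matrix.mul_neg, neg_mul]
      abel
  -- the transformation matrix and its right inverse
  set A : Matrix (Fin (r₁ + r₂)) (Fin (r₁ + r₂)) ℝ := (Matrix.reindex e e) (Dmat * W₀)
    with hAdef
  set Binv : Matrix (Fin (r₁ + r₂)) (Fin (r₁ + r₂)) ℝ := (Matrix.reindex e e) (W₀inv * Dinv)
    with hBdef
  have hAB : A * Binv = 1 := by
    rw [hAdef, hBdef, hmul, Matrix.mul_assoc Dmat, ← Matrix.mul_assoc W₀, hW1,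
      Matrix.one_mul, hD1, hone]
  have hBA : Binv * A = 1 := by
    rw [hAdef, hBdef, hmul, Matrix.mul_assoc W₀inv, ← Matrix.mul_assoc Dinv, hD2,
      Matrix.one_mul, hW2, hone]
  have hAinv : A⁻¹ = Binv := Matrix.inv_eq_right_inv hAB
  have hwinv : (whiten f hMgg hS)⁻¹ = (Matrix.reindex e e) W₀inv :=
    Matrix.inv_eq_right_inv (by rw [hwhiten, hmul, hW1, hone])
  have cUg : ∀ (c : ℕ) (X : Matrix (Fin r₁) (Fin c) ℝ), Ugᵀ * (Ug * X) = X := fun c X => by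
    rw [← Matrix.mul_assoc, hUg2, Matrix.one_mul]
  have cUh : ∀ (c : ℕ) (X : Matrix (Fin r₂) (Fin c) ℝ), Uhᵀ * (Uh * X) = X := fun c X => by
    rw [← Matrix.mul_assoc, hUh2, Matrix.one_mul]
  have hΓB : Γ * Binv = (Γ * (whiten f hMgg hS)⁻¹) * (Matrix.reindex e e) Dinv := by
    rw [hwinv, hBdef, Matrix.mul_assoc, hmul]
  refine ⟨A, Matrix.isUnit_det_of_right_inverse hAB, ?_, ?_, ?_, ?_, ?_, ?_⟩
  · -- (i)
    intro t
    rw [hAinv, Matrix.mulVec_mulVec, Matrix.mul_assoc, hBA, Matrix.mul_one,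
      Matrix.mulVec_sub]
    abel
  · -- (ii)
    intro i hz a
    rw [hAinv]
    have hBblocks : Binv = (Matrix.reindex e e)
        (Matrix.fromBlocks (Gs * Ug) 0 (Mhg f * (Mgg f)⁻¹ * Gs * Ug) (Ss * Uh)) := by
      rw [hBdef, hW₀invdef, hDinvdef, Matrix.fromBlocks_multiply]
      congr 1 <;> simp [Matrix.mul_assoc]
    rw [hBblocks, he]
    have hkey := congrFun (congrFun (mul_reindex_block Γ (Gs * Ug) 0
      (Mhg f * (Mgg f)⁻¹ * Gs * Ug) (Ss * Uh)).2 i) a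
    simp only [Matrix.submatrix_apply, id_eq] at hkey
    rw [hkey]
    simp [Matrix.mul_apply, hz]
  · -- (iii) zero mean
    have hsum : ∑ t, A.mulVec (f t - fbar f) = A.mulVec (∑ t, (f t - fbar f)) :=
      (map_sum A.mulVecLin (fun t => f t - fbar f) Finset.univ).symm
    rw [hsum, sum_centered, Matrix.mulVec_zero]
  · -- (iii) identity covariance
    rw [cov_transform, Mff_blocks, ← he, hAdef, Matrix.transpose_reindex, hmul, hmul]
    have hDT : Dmatᵀ = Dinv := by
      rw [hDdef, hDinvdef, Matrix.fromBlocks_transpose]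
      simp
    have key : Dmat * W₀ * Matrix.fromBlocks (Mgg f) (Mhg f)ᵀ (Mhg f) (Mhh f) *
        (Dmat * W₀)ᵀ = 1 := by
      rw [Matrix.transpose_mul, hDT]
      calc Dmat * W₀ * Matrix.fromBlocks (Mgg f) (Mhg f)ᵀ (Mhg f) (Mhh f) * (W₀ᵀ * Dinv)
          = Dmat * (W₀ * Matrix.fromBlocks (Mgg f) (Mhg f)ᵀ (Mhg f) (Mhh f) * W₀ᵀ) *
            Dinv := by noncomm_ring
        _ = 1 := by rw [hWN, Matrix.mul_one, hD1]
    rw [key, hone]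
  · -- (iv) g-block
    rw [hAinv]
    have hsubg : (Γ * Binv).submatrix id (Fin.castAdd r₂)
        = (Γ * (whiten f hMgg hS)⁻¹).submatrix id (Fin.castAdd r₂) * Ug := by
      rw [hΓB, hDinvdef, he, (mul_reindex_block _ Ug 0 0 Uh).1]
      simp
    rw [hsubg]
    refine ⟨dg, hdg, ?_⟩
    have hge' : (m : ℝ)⁻¹ • (((Γ * (whiten f hMgg hS)⁻¹).submatrix id (Fin.castAdd r₂))ᵀ *
        Sg⁻¹ * (Γ * (whiten f hMgg hS)⁻¹).submatrix id (Fin.castAdd r₂))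
        = Ug * Matrix.diagonal dg * Ugᵀ := by
      rw [← hge, Matrix.smul_mul, Matrix.smul_mul]
    set X := (Γ * (whiten f hMgg hS)⁻¹).submatrix id (Fin.castAdd r₂) with hXdef
    rw [Matrix.transpose_mul, Matrix.smul_mul, Matrix.smul_mul]
    have expand : Ugᵀ * Xᵀ * Sg⁻¹ * (X * Ug) = Ugᵀ * (Xᵀ * Sg⁻¹ * X) * Ug := by
      simp only [Matrix.mul_assoc]
    rw [expand, show (m : ℝ)⁻¹ • (Ugᵀ * (Xᵀ * Sg⁻¹ * X) * Ug)
        = Ugᵀ * ((m : ℝ)⁻¹ • (Xᵀ * Sg⁻¹ * X)) * Ug from by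
          rw [Matrix.mul_smul, Matrix.smul_mul], hge']
    simp only [Matrix.mul_assoc, hUg2, Matrix.mul_one, cUg]
  · -- (iv) h-block
    rw [hAinv]
    have hsubh : (Γ * Binv).submatrix id (Fin.natAdd r₁)
        = (Γ * (whiten f hMgg hS)⁻¹).submatrix id (Fin.natAdd r₁) * Uh := by
      rw [hΓB, hDinvdef, he, (mul_reindex_block _ Ug 0 0 Uh).2]
      simp
    rw [hsubh]
    refine ⟨dh, hdh, ?_⟩
    have hhe' : (m : ℝ)⁻¹ • (((Γ * (whiten f hMgg hS)⁻¹).submatrix id (Fin.natAdd r₁))ᵀ *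
        Sg⁻¹ * (Γ * (whiten f hMgg hS)⁻¹).submatrix id (Fin.natAdd r₁))
        = Uh * Matrix.diagonal dh * Uhᵀ := by
      rw [← hhe, Matrix.smul_mul, Matrix.smul_mul]
    set X := (Γ * (whiten f hMgg hS)⁻¹).submatrix id (Fin.natAdd r₁) with hXdef
    rw [Matrix.transpose_mul, Matrix.smul_mul, Matrix.smul_mul]
    have expand : Uhᵀ * Xᵀ * Sg⁻¹ * (X * Uh) = Uhᵀ * (Xᵀ * Sg⁻¹ * X) * Uh := by
      simp only [Matrix.mul_assoc]
    rw [expand, show (m : ℝ)⁻¹ • (Uhᵀ * (Xᵀ * Sg⁻¹ * X) * Uh)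
        = Uhᵀ * ((m : ℝ)⁻¹ • (Xᵀ * Sg⁻¹ * X)) * Uh from by
          rw [Matrix.mul_smul, Matrix.smul_mul], hhe']
    simp only [Matrix.mul_assoc, hUh2, Matrix.mul_one, cUh]
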